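/- Let L/K be a Galois field extension (possibly infinite) with Galois group Γ = Gal(L/K) carrying the Krull topology, let G be a group, and let ρ: G → GL_n(L) be a representation such that all entries of all matrices ρ(g), g ∈ G, lie in a single finite subextension of L/K. Then the subsets Γ_[ρ] := {γ ∈ Γ : there exists a character ε: G → L^× with γ∘ρ equivalent to ρ ⊗ ε} and Δ_[ρ] := {γ ∈ Γ : γ∘ρ is equivalent to ρ} are open subgroups of Γ (hence of finite index). -/

import Mathlib

open Matrix

noncomputable section

/-- Equivalence of matrix representations: conjugacy by an invertible matrix. -/
def GLEquiv {G : Type*} (n : ℕ) (L : Type*) [Field L]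
    (ρ ρ' : G → Matrix (Fin n) (Fin n) L) : Prop :=
  ∃ M : Matrix (Fin n) (Fin n) L, IsUnit M ∧ ∀ g, ρ' g = M * ρ g * M⁻¹

namespace InnerTwistAux

variable {G : Type*} {n : ℕ} {L : Type*} [Field L]

lemma glequiv_iff (ρ ρ' : G → Matrix (Fin n) (Fin n) L) :
    GLEquiv n L ρ ρ' ↔
      ∃ M : Matrix (Fin n) (Fin n) L, IsUnit M ∧ ∀ g, ρ' g * M = M * ρ g := by
  constructor
  · rintro ⟨M, hM, h⟩
    have hd := (Matrix.isUnit_iff_isUnit_det M).mp hM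
    refine ⟨M, hM, fun g => ?_⟩
    rw [h g, Matrix.mul_assoc (M * ρ g), Matrix.nonsing_inv_mul _ hd, Matrix.mul_one]
  · rintro ⟨M, hM, h⟩
    have hd := (Matrix.isUnit_iff_isUnit_det M).mp hM
    refine ⟨M, hM, fun g => ?_⟩
    rw [← h g, Matrix.mul_nonsing_inv_cancel_right _ _ hd]

lemma glequiv_refl (ρ : G → Matrix (Fin n) (Fin n) L) : GLEquiv n L ρ ρ :=
  ⟨1, isUnit_one, fun g => by simp⟩

lemma glequiv_symm {ρ ρ' : G → Matrix (Fin n) (Fin n) L}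
    (h : GLEquiv n L ρ ρ') : GLEquiv n L ρ' ρ := by
  rw [glequiv_iff] at h ⊢
  obtain ⟨M, hM, h⟩ := h
  have hd := (Matrix.isUnit_iff_isUnit_det M).mp hM
  refine ⟨M⁻¹, ?_, fun g => ?_⟩
  · rw [Matrix.isUnit_iff_isUnit_det, Matrix.det_nonsing_inv]
    exact isUnit_ringInverse.mpr hd
  · calc ρ g * M⁻¹ = M⁻¹ * (M * ρ g) * M⁻¹ := by
          rw [← Matrix.mul_assoc, Matrix.nonsing_inv_mul _ hd, Matrix.one_mul]
    _ = M⁻¹ * (ρ' g * M) * M⁻¹ := by rw [h g]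
    _ = M⁻¹ * ρ' g := by
          rw [← Matrix.mul_assoc, Matrix.mul_nonsing_inv_cancel_right _ _ hd]

lemma glequiv_trans {ρ₁ ρ₂ ρ₃ : G → Matrix (Fin n) (Fin n) L}
    (h1 : GLEquiv n L ρ₁ ρ₂) (h2 : GLEquiv n L ρ₂ ρ₃) : GLEquiv n L ρ₁ ρ₃ := by
  rw [glequiv_iff] at h1 h2 ⊢
  obtain ⟨M, hM, h1⟩ := h1
  obtain ⟨N, hN, h2⟩ := h2
  refine ⟨N * M, hN.mul hM, fun g => ?_⟩
  rw [← Matrix.mul_assoc, h2 g, Matrix.mul_assoc, h1 g, ← Matrix.mul_assoc]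

lemma map_mul_matrix {K : Type*} [Field K] [Algebra K L] (γ : L ≃ₐ[K] L)
    (A B : Matrix (Fin n) (Fin n) L) :
    (A * B).map ⇑γ = A.map ⇑γ * B.map ⇑γ := by
  ext i j
  simp [Matrix.mul_apply, Matrix.map_apply, map_sum]

lemma glequiv_map {K : Type*} [Field K] [Algebra K L] (γ : L ≃ₐ[K] L)
    {ρ ρ' : G → Matrix (Fin n) (Fin n) L} (h : GLEquiv n L ρ ρ') :
    GLEquiv n L (fun g => (ρ g).map ⇑γ) (fun g => (ρ' g).map ⇑γ) := by
  rw [glequiv_iff] at h ⊢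
  obtain ⟨M, hM, h⟩ := h
  refine ⟨M.map ⇑γ, ?_, fun g => ?_⟩
  · have : M.map ⇑γ = (γ : L ≃+* L).toRingHom.mapMatrix M := rfl
    rw [this]
    exact hM.map _
  · rw [← map_mul_matrix, ← map_mul_matrix, h g]

lemma glequiv_smul (ε : G → Lˣ) {ρ ρ' : G → Matrix (Fin n) (Fin n) L}
    (h : GLEquiv n L ρ ρ') :
    GLEquiv n L (fun g => (ε g : L) • ρ g) (fun g => (ε g : L) • ρ' g) := by
  obtain ⟨M, hM, h⟩ := h
  refine ⟨M, hM, fun g => ?_⟩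
  simp only [h g, Matrix.smul_mul, Matrix.mul_smul]

end InnerTwistAux

open InnerTwistAux

/-- For a representation `ρ : G → GL_n(L)` whose matrix entries all lie in a single
finite subextension of the Galois extension `L/K`, the sets
`Γ_[ρ] = {γ : γ∘ρ ~ ρ ⊗ ε for some character ε}` and `Δ_[ρ] = {γ : γ∘ρ ~ ρ}` are
open subgroups of `Gal(L/K)` with the Krull topology (hence of finite index). -/
theorem inner_twist_groups_open
    {K L : Type*} [Field K] [Field L] [Algebra K L] [IsGalois K L]
    {G : Type*} [Group G] {n : ℕ}
    (ρ : G →* Matrix (Fin n) (Fin n) L)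
    (hfin : ∃ E : IntermediateField K L, FiniteDimensional K E ∧
      ∀ g i j, ρ g i j ∈ E) :
    (∃ H : Subgroup (L ≃ₐ[K] L),
        (H : Set (L ≃ₐ[K] L)) =
          {γ : L ≃ₐ[K] L | ∃ ε : G →* Lˣ,
            GLEquiv n L (fun g => (ε g : L) • ρ g) (fun g => (ρ g).map ⇑γ)} ∧
        IsOpen (H : Set (L ≃ₐ[K] L)) ∧ H.FiniteIndex) ∧
    (∃ H : Subgroup (L ≃ₐ[K] L),
        (H : Set (L ≃ₐ[K] L)) =
          {γ : L ≃ₐ[K] L | GLEquiv n L (fun g => ρ g) (fun g => (ρ g).map ⇑γ)} ∧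
        IsOpen (H : Set (L ≃ₐ[K] L)) ∧ H.FiniteIndex) := by
  obtain ⟨E, hE, hmem⟩ := hfin
  haveI := hE
  set E' : IntermediateField K L := IntermediateField.normalClosure K E L with hE'def
  haveI : Normal K L := IsGalois.to_normal
  haveI : FiniteDimensional K E' := normalClosure.is_finiteDimensional K E L
  haveI : Normal K E' := normalClosure.normal K E L
  -- elements of the fixing subgroup of E' act trivially on ρ
  have hfix : ∀ γ ∈ E'.fixingSubgroup, ∀ g, (ρ g).map ⇑γ = ρ g := by
    intro γ hγ g
    ext i j
    rw [Matrix.map_apply]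
    exact (IntermediateField.mem_fixingSubgroup_iff E' γ).mp hγ _
      (IntermediateField.le_normalClosure E (hmem g i j))
  -- the fixing subgroup of E' has finite index
  haveI : Finite (E' ≃ₐ[K] E') := Finite.of_fintype _
  haveI hFI : E'.fixingSubgroup.FiniteIndex := by
    rw [← IntermediateField.restrictNormalHom_ker E']
    exact Subgroup.finiteIndex_ker _
  have hfixOpen : IsOpen (E'.fixingSubgroup : Set (L ≃ₐ[K] L)) :=
    IntermediateField.fixingSubgroup_isOpen E'
  -- map composition lemma
  have hcomp : ∀ (γ₁ γ₂ : L ≃ₐ[K] L) (g : G),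
      ((ρ g).map ⇑γ₂).map ⇑γ₁ = (ρ g).map ⇑(γ₁ * γ₂) := by
    intro γ₁ γ₂ g
    rw [Matrix.map_map]
    rfl
  have hinvcomp : ∀ (γ : L ≃ₐ[K] L) (g : G),
      ((ρ g).map ⇑γ).map ⇑γ⁻¹ = ρ g := by
    intro γ g
    rw [Matrix.map_map]
    ext i j
    exact AlgEquiv.symm_apply_apply γ _
  constructor
  · -- the Γ subgroup
    refine ⟨{
      carrier := {γ : L ≃ₐ[K] L | ∃ ε : G →* Lˣ,
        GLEquiv n L (fun g => (ε g : L) • ρ g) (fun g => (ρ g).map ⇑γ)}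
      one_mem' := ⟨1, by
        have e1 : (fun g => (((1 : G →* Lˣ) g : L)) • ρ g) = fun g => ρ g := by
          funext g; simp
        have e2 : (fun g => (ρ g).map ⇑(1 : L ≃ₐ[K] L)) = fun g => ρ g := by
          funext g; ext i j; simp [Matrix.map_apply]
        rw [e1, e2]
        exact glequiv_refl _⟩
      mul_mem' := by
        rintro γ₁ γ₂ ⟨ε₁, h1⟩ ⟨ε₂, h2⟩
        set εγ : G →* Lˣ :=
          (Units.map (γ₁ : L ≃ₐ[K] L).toAlgHom.toRingHom.toMonoidHom).comp ε₂ with hεγ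
        have hεγ_apply : ∀ g, ((εγ g : L)) = γ₁ (ε₂ g : L) := fun g => rfl
        have A := glequiv_map γ₁ h2
        have eA : (fun g => (((ε₂ g : L)) • ρ g).map ⇑γ₁)
            = fun g => (εγ g : L) • ((ρ g).map ⇑γ₁) := by
          funext g
          ext i j
          simp [Matrix.map_apply, Matrix.smul_apply, smul_eq_mul, _root_.map_mul, hεγ_apply]
        have eA2 : (fun g => ((ρ g).map ⇑γ₂).map ⇑γ₁)
            = fun g => (ρ g).map ⇑(γ₁ * γ₂) := by
          funext g; exact hcomp γ₁ γ₂ g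
        rw [eA, eA2] at A
        have B := glequiv_smul (fun g => εγ g) h1
        have eB : (fun g => ((εγ g : L)) • (((ε₁ g : L)) • ρ g))
            = fun g => (((εγ * ε₁) g : L)) • ρ g := by
          funext g
          rw [smul_smul]
          simp
        rw [eB] at B
        exact ⟨εγ * ε₁, glequiv_trans B A⟩
      inv_mem' := by
        rintro γ ⟨ε, h⟩
        set δ : G →* Lˣ :=
          (Units.map (γ⁻¹ : L ≃ₐ[K] L).toAlgHom.toRingHom.toMonoidHom).comp ε with hδ
        have hδ_apply : ∀ g, ((δ g : L)) = γ⁻¹ (ε g : L) := fun g => rfl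
        have h' := glequiv_map γ⁻¹ h
        have e1 : (fun g => (((ε g : L)) • ρ g).map ⇑γ⁻¹)
            = fun g => (δ g : L) • ((ρ g).map ⇑γ⁻¹) := by
          funext g
          ext i j
          simp [Matrix.map_apply, Matrix.smul_apply, smul_eq_mul, _root_.map_mul, hδ_apply]
        have e2 : (fun g => ((ρ g).map ⇑γ).map ⇑γ⁻¹) = fun g => ρ g := by
          funext g; exact hinvcomp γ g
        rw [e1, e2] at h'
        have h'' := glequiv_smul (fun g => (δ⁻¹ g)) (glequiv_symm h')
        have e3 : (fun g => ((δ⁻¹ g : Lˣ) : L) • (((δ g : L)) • ((ρ g).map ⇑γ⁻¹)))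
            = fun g => (ρ g).map ⇑γ⁻¹ := by
          funext g
          rw [smul_smul]
          simp
        rw [e3] at h''
        exact ⟨δ⁻¹, h''⟩ }, rfl, ?_, ?_⟩
    · refine Subgroup.isOpen_mono (H₁ := E'.fixingSubgroup) ?_ hfixOpen
      intro γ hγ
      refine ⟨1, ?_⟩
      have e1 : (fun g => (((1 : G →* Lˣ) g : L)) • ρ g) = fun g => ρ g := by
        funext g; simp
      have e2 : (fun g => (ρ g).map ⇑γ) = fun g => ρ g := by
        funext g; exact hfix γ hγ g
      rw [e1, e2]
      exact glequiv_refl _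
    · refine Subgroup.finiteIndex_of_le (H := E'.fixingSubgroup) ?_
      intro γ hγ
      refine ⟨1, ?_⟩
      have e1 : (fun g => (((1 : G →* Lˣ) g : L)) • ρ g) = fun g => ρ g := by
        funext g; simp
      have e2 : (fun g => (ρ g).map ⇑γ) = fun g => ρ g := by
        funext g; exact hfix γ hγ g
      rw [e1, e2]
      exact glequiv_refl _
  · -- the Δ subgroup
    refine ⟨{
      carrier := {γ : L ≃ₐ[K] L | GLEquiv n L (fun g => ρ g) (fun g => (ρ g).map ⇑γ)}
      one_mem' := by
        have e2 : (fun g => (ρ g).map ⇑(1 : L ≃ₐ[K] L)) = fun g => ρ g := by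
          funext g; ext i j; simp [Matrix.map_apply]
        show GLEquiv n L _ _
        rw [e2]
        exact glequiv_refl _
      mul_mem' := by
        intro γ₁ γ₂ h1 h2
        have h2' := glequiv_map γ₁ h2
        have e : (fun g => ((ρ g).map ⇑γ₂).map ⇑γ₁)
            = fun g => (ρ g).map ⇑(γ₁ * γ₂) := by
          funext g; exact hcomp γ₁ γ₂ g
        rw [e] at h2'
        exact glequiv_trans h1 h2'
      inv_mem' := by
        intro γ h
        have h' := glequiv_map γ⁻¹ h
        have e2 : (fun g => ((ρ g).map ⇑γ).map ⇑γ⁻¹) = fun g => ρ g := by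
          funext g; exact hinvcomp γ g
        rw [e2] at h'
        exact glequiv_symm h' }, rfl, ?_, ?_⟩
    · refine Subgroup.isOpen_mono (H₁ := E'.fixingSubgroup) ?_ hfixOpen
      intro γ hγ
      have e2 : (fun g => (ρ g).map ⇑γ) = fun g => ρ g := by
        funext g; exact hfix γ hγ g
      show GLEquiv n L _ _
      rw [e2]
      exact glequiv_refl _
    · refine Subgroup.finiteIndex_of_le (H := E'.fixingSubgroup) ?_
      intro γ hγ
      have e2 : (fun g => (ρ g).map ⇑γ) = fun g => ρ g := by
        funext g; exact hfix γ hγ g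
      show GLEquiv n L _ _
      rw [e2]
      exact glequiv_refl _
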